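/- Personalized-game equilibrium guarantee (core inequality of Theorem 3.1): Fix a user i₀ ∈ N, real numbers ε_U ≥ 0, ε_P ≥ 0, B ∈ ℝ, and (ε_U, ε_P)-Weak Market Alignment data (F_{j,i}, λ_{j,i}, c_j, w_{j,i}, c_i). Let μ and ν be probability distributions on (∏_{i∈N} A_i) × Y such that: (1) for every provider j ∈ T, E_ν[u^P_j(a,y)] ≤ E_μ[u^P_j(a,y)] (no provider profits from the deviation); (2) for every provider j ∈ T and every user i ≠ i₀, E_ν[F_{j,i}(a_i,y)] = E_μ[F_{j,i}(a_i,y)] (the deviation changes only user i₀'s induced distribution); and (3) E_ν[u_{i₀}(a_{i₀},y)] ≥ B (the deviation gives user i₀ expected utility at least B). Then E_μ[u_{i₀}(a_{i₀},y)] ≥ B − 2ε_U − 2ε_P·μ_{i₀}, where μ_{i₀} = ∑_{j∈T : w_{j,i₀}>0} w_{j,i₀}/λ_{j,i₀}. -/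

import Mathlib

open scoped Classical

/-- Expectation of `f` under a distribution `p` on a finite type. -/
noncomputable def Ex {X : Type*} [Fintype X] (p : X → ℝ) (f : X → ℝ) : ℝ :=
  ∑ x, p x * f x

/-- Expectation is within `ε` of expectation of a pointwise `ε`-close function. -/
lemma Ex_abs_le {X : Type*} [Fintype X] (p f g : X → ℝ) (ε : ℝ)
    (hp0 : ∀ x, 0 ≤ p x) (hp1 : ∑ x, p x = 1)
    (h : ∀ x, |f x - g x| ≤ ε) : |Ex p f - Ex p g| ≤ ε := by
  have : Ex p f - Ex p g = ∑ x, p x * (f x - g x) := by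
    simp [Ex, mul_sub, Finset.sum_sub_distrib]
  rw [this]
  calc |∑ x, p x * (f x - g x)| ≤ ∑ x, |p x * (f x - g x)| :=
        Finset.abs_sum_le_sum_abs _ _
    _ ≤ ∑ x, p x * ε := by
        apply Finset.sum_le_sum
        intro x _
        rw [abs_mul, abs_of_nonneg (hp0 x)]
        exact mul_le_mul_of_nonneg_left (h x) (hp0 x)
    _ = ε := by rw [← Finset.sum_mul, hp1, one_mul]

/-- Linearity of expectation for weighted sums plus a constant. -/
lemma Ex_lin {X : Type*} [Fintype X] {I : Type*} [Fintype I]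
    (p : X → ℝ) (hp1 : ∑ x, p x = 1) (g : I → X → ℝ) (co : I → ℝ) (d : ℝ) :
    Ex p (fun x => ∑ i, co i * g i x + d) = ∑ i, co i * Ex p (g i) + d := by
  simp only [Ex, mul_add, Finset.sum_add_distrib, ← Finset.sum_mul, hp1, one_mul,
    Finset.mul_sum]
  congr 1
  rw [Finset.sum_comm]
  congr 1; ext i; congr 1; ext x; ring

/-- Personalized-game equilibrium guarantee (core inequality of Theorem 3.1): given
`(ε_U, ε_P)`-Weak Market Alignment data, if `μ` (the equilibrium distribution) and `ν`
(the distribution induced by a deviation) satisfy (1) no provider profits from the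
deviation, (2) the deviation changes only user `i₀`'s induced distribution, and (3) the
deviation gives user `i₀` expected utility at least `B`, then under `μ` user `i₀`'s
expected utility is at least `B − 2ε_U − 2ε_P·μ_{i₀}` where
`μ_{i₀} = ∑_{j : w_{j,i₀} > 0} w_{j,i₀}/λ_{j,i₀}`. -/

theorem personalized_equilibrium_guarantee
    {N T Y : Type*} [Fintype N] [Nonempty N] [Fintype T] [Nonempty T]
    [Fintype Y] [Nonempty Y]
    {A : N → Type*} [∀ i, Fintype (A i)] [∀ i, Nonempty (A i)]
    (u : ∀ i : N, A i → Y → ℝ) (uP : T → (∀ i, A i) → Y → ℝ)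
    (hu : ∀ i (a : A i) (y : Y), u i a y ∈ Set.Icc (0 : ℝ) 1)
    (huP : ∀ j (a : ∀ i, A i) (y : Y), uP j a y ∈ Set.Icc (0 : ℝ) 1)
    (i₀ : N) (εU εP B : ℝ) (hεU : 0 ≤ εU) (hεP : 0 ≤ εP)
    -- Weak Market Alignment data
    (F : T → ∀ i : N, A i → Y → ℝ)
    (lam : T → N → ℝ) (c : T → ℝ) (w : T → N → ℝ) (cU : N → ℝ)
    (hF : ∀ j i (a : A i) (y : Y), 0 ≤ F j i a y)
    (hlam : ∀ j i, 0 ≤ lam j i)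
    (hw : ∀ j i, 0 ≤ w j i)
    (hP : ∀ j (a : ∀ i, A i) (y : Y),
      |uP j a y - (∑ i, lam j i * F j i (a i) y + c j)| ≤ εP)
    (hU : ∀ i (a : A i) (y : Y),
      |u i a y - (∑ j, w j i * F j i a y + cU i)| ≤ εU)
    (hcov : ∀ i, ∃ j, 0 < lam j i ∧ 0 < w j i)
    (himp : ∀ j i, 0 < w j i → 0 < lam j i)
    -- the two distributions
    (μ ν : (∀ i, A i) × Y → ℝ)
    (hμ0 : ∀ x, 0 ≤ μ x) (hμ1 : ∑ x, μ x = 1)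
    (hν0 : ∀ x, 0 ≤ ν x) (hν1 : ∑ x, ν x = 1)
    -- (1) no provider profits from the deviation
    (h1 : ∀ j, Ex ν (fun x => uP j x.1 x.2) ≤ Ex μ (fun x => uP j x.1 x.2))
    -- (2) the deviation changes only user i₀'s induced distribution
    (h2 : ∀ j, ∀ i, i ≠ i₀ →
      Ex ν (fun x => F j i (x.1 i) x.2) = Ex μ (fun x => F j i (x.1 i) x.2))
    -- (3) the deviation gives user i₀ expected utility at least B
    (h3 : B ≤ Ex ν (fun x => u i₀ (x.1 i₀) x.2)) :
    Ex μ (fun x => u i₀ (x.1 i₀) x.2) ≥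
      B - 2 * εU - 2 * εP *
        ∑ j ∈ Finset.univ.filter (fun j : T => 0 < w j i₀), w j i₀ / lam j i₀ := by
  set Eμ : T → ℝ := fun j => Ex μ (fun x => F j i₀ (x.1 i₀) x.2) with hEμ
  set Eν : T → ℝ := fun j => Ex ν (fun x => F j i₀ (x.1 i₀) x.2) with hEν
  -- Provider-side key inequality
  have key : ∀ j, lam j i₀ * (Eν j - Eμ j) ≤ 2 * εP := by
    intro j
    have hμP := Ex_abs_le μ (fun x => uP j x.1 x.2)
      (fun x => ∑ i, lam j i * F j i (x.1 i) x.2 + c j) εP hμ0 hμ1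
      (fun x => hP j x.1 x.2)
    have hνP := Ex_abs_le ν (fun x => uP j x.1 x.2)
      (fun x => ∑ i, lam j i * F j i (x.1 i) x.2 + c j) εP hν0 hν1
      (fun x => hP j x.1 x.2)
    rw [Ex_lin μ hμ1 (fun i x => F j i (x.1 i) x.2) (fun i => lam j i) (c j)] at hμP
    rw [Ex_lin ν hν1 (fun i x => F j i (x.1 i) x.2) (fun i => lam j i) (c j)] at hνP
    have hdiff : (∑ i, lam j i * Ex ν (fun x => F j i (x.1 i) x.2))
        - (∑ i, lam j i * Ex μ (fun x => F j i (x.1 i) x.2))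
        = lam j i₀ * (Eν j - Eμ j) := by
      rw [← Finset.sum_sub_distrib]
      rw [Finset.sum_eq_single i₀]
      · ring
      · intro i _ hi
        rw [h2 j i hi]; ring
      · intro h; exact absurd (Finset.mem_univ i₀) h
    have h1j := h1 j
    rw [abs_le] at hμP hνP
    linarith [hμP.1, hμP.2, hνP.1, hνP.2]
  -- User-side approximation
  have hμU := Ex_abs_le μ (fun x => u i₀ (x.1 i₀) x.2)
    (fun x => ∑ j, w j i₀ * F j i₀ (x.1 i₀) x.2 + cU i₀) εU hμ0 hμ1
    (fun x => hU i₀ (x.1 i₀) x.2)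
  have hνU := Ex_abs_le ν (fun x => u i₀ (x.1 i₀) x.2)
    (fun x => ∑ j, w j i₀ * F j i₀ (x.1 i₀) x.2 + cU i₀) εU hν0 hν1
    (fun x => hU i₀ (x.1 i₀) x.2)
  rw [Ex_lin μ hμ1 (fun j x => F j i₀ (x.1 i₀) x.2) (fun j => w j i₀) (cU i₀)] at hμU
  rw [Ex_lin ν hν1 (fun j x => F j i₀ (x.1 i₀) x.2) (fun j => w j i₀) (cU i₀)] at hνU
  -- Bound the weighted sum of differences
  have hsum : ∑ j, w j i₀ * (Eν j - Eμ j)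
      ≤ 2 * εP * ∑ j ∈ Finset.univ.filter (fun j : T => 0 < w j i₀), w j i₀ / lam j i₀ := by
    rw [← Finset.sum_filter_of_ne (p := fun j : T => 0 < w j i₀)
      (f := fun j => w j i₀ * (Eν j - Eμ j))
      (by intro j _ hne
          rcases lt_or_eq_of_le (hw j i₀) with h | h
          · exact h
          · exact absurd (by simp [← h]) hne)]
    rw [Finset.mul_sum]
    apply Finset.sum_le_sum
    intro j hj
    rw [Finset.mem_filter] at hj
    have hlj := himp j i₀ hj.2
    have : w j i₀ * (Eν j - Eμ j) = (w j i₀ / lam j i₀) * (lam j i₀ * (Eν j - Eμ j)) := by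
      field_simp
    rw [this]
    have hwl : 0 ≤ w j i₀ / lam j i₀ := div_nonneg (hw j i₀) (le_of_lt hlj)
    calc (w j i₀ / lam j i₀) * (lam j i₀ * (Eν j - Eμ j))
        ≤ (w j i₀ / lam j i₀) * (2 * εP) := mul_le_mul_of_nonneg_left (key j) hwl
      _ = 2 * εP * (w j i₀ / lam j i₀) := by ring
  have hsplit : (∑ j, w j i₀ * Eν j) - (∑ j, w j i₀ * Eμ j)
      = ∑ j, w j i₀ * (Eν j - Eμ j) := by
    rw [← Finset.sum_sub_distrib]; congr 1; ext j; ring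
  rw [abs_le] at hμU hνU
  have := hμU.1
  have := hμU.2
  have := hνU.1
  have := hνU.2
  linarith
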